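/- In the LT one-step sampling model, for any two distinct nodes u, v ∈ V with 0 < q(u) < 1 and q(v) < 1, the edge weight satisfies w(u,v) = (ap(v) − ap(v|ū)) / (q(u) · (1 − q(v))). -/

import Mathlib

set_option autoImplicit false

open MeasureTheory ProbabilityTheory

lemma aux_tail {Ω : Type*} [MeasurableSpace Ω] (μ : Measure Ω) [IsProbabilityMeasure μ]
    {V : Type*} [Fintype V]
    (Y : Ω → V → ℝ) (R : Ω → ℝ) (hY : Measurable Y) (hR : Measurable R)
    (hind : IndepFun Y R μ)
    (hmap : Measure.map R μ = (volume : Measure ℝ).restrict (Set.Icc 0 1))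
    (A : Set (V → ℝ)) (hA : MeasurableSet A)
    (g : (V → ℝ) → ℝ) (hg : Measurable g)
    (hg0 : ∀ ω, 0 ≤ g (Y ω)) (hg1 : ∀ ω, g (Y ω) ≤ 1) :
    μ {ω | Y ω ∈ A ∧ R ω ≤ g (Y ω)}
      = ∫⁻ ω, A.indicator (fun y => ENNReal.ofReal (g y)) (Y ω) ∂μ := by
  set ν : Measure ℝ := (volume : Measure ℝ).restrict (Set.Icc 0 1) with hν
  set E : Set ((V → ℝ) × ℝ) := {p | p.1 ∈ A ∧ p.2 ≤ g p.1} with hE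
  have hEmeas : MeasurableSet E := by
    apply MeasurableSet.inter
    · exact hA.preimage measurable_fst
    · exact measurableSet_le measurable_snd (hg.comp measurable_fst)
  have hpair : Measure.map (fun ω => (Y ω, R ω)) μ = (Measure.map Y μ).prod (Measure.map R μ) :=
    (indepFun_iff_map_prod_eq_prod_map_map hY.aemeasurable hR.aemeasurable).mp hind
  have h1 : {ω | Y ω ∈ A ∧ R ω ≤ g (Y ω)} = (fun ω => (Y ω, R ω)) ⁻¹' E := rfl
  rw [h1, ← Measure.map_apply (hY.prodMk hR) hEmeas, hpair, hmap,
    Measure.prod_apply hEmeas, lintegral_map (measurable_measure_prodMk_left hEmeas) hY]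
  refine lintegral_congr fun ω => ?_
  by_cases h : Y ω ∈ A
  · have hslice : Prod.mk (Y ω) ⁻¹' E = Set.Iic (g (Y ω)) := by
      ext x; simp [hE, h, Set.mem_Iic]
    rw [hslice, Set.indicator_of_mem h, hν, Measure.restrict_apply measurableSet_Iic]
    have hic : Set.Iic (g (Y ω)) ∩ Set.Icc 0 1 = Set.Icc 0 (g (Y ω)) := by
      ext x
      simp only [Set.mem_inter_iff, Set.mem_Iic, Set.mem_Icc]
      exact ⟨fun ⟨h1, h2, _⟩ => ⟨h2, h1⟩, fun ⟨h0, hc⟩ => ⟨hc, h0, hc.trans (hg1 ω)⟩⟩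
    rw [hic, Real.volume_Icc, sub_zero]
  · have hslice : Prod.mk (Y ω) ⁻¹' E = ∅ := by
      ext x; simp [hE, h]
    rw [hslice, Set.indicator_of_notMem h, measure_empty]

lemma aux_sum {Ω : Type*} [MeasurableSpace Ω] (μ : Measure Ω)
    {V : Type*} [Fintype V]
    (Y : Ω → V → ℝ) (hY : Measurable Y)
    (h01 : ∀ ω u, Y ω u = 0 ∨ Y ω u = 1)
    (A : Set (V → ℝ)) (hA : MeasurableSet A)
    (s : Finset V) (c : V → ℝ) (hc : ∀ u, 0 ≤ c u) :
    ∫⁻ ω, A.indicator (fun y => ENNReal.ofReal (∑ u ∈ s, c u * y u)) (Y ω) ∂μ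
      = ∑ u ∈ s, ENNReal.ofReal (c u) * μ (Y ⁻¹' A ∩ {ω | Y ω u = 1}) := by
  have hmeas : ∀ u : V, MeasurableSet (Y ⁻¹' A ∩ {ω | Y ω u = 1}) := fun u => by
    refine (hY hA).inter ?_
    exact ((measurable_pi_apply u).comp hY) (measurableSet_singleton 1)
  have key : ∀ ω, A.indicator (fun y => ENNReal.ofReal (∑ u ∈ s, c u * y u)) (Y ω)
      = ∑ u ∈ s, (Y ⁻¹' A ∩ {ω | Y ω u = 1}).indicator
          (fun _ => ENNReal.ofReal (c u)) ω := by
    intro ω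
    by_cases h : Y ω ∈ A
    · rw [Set.indicator_of_mem h, ENNReal.ofReal_sum_of_nonneg (fun u _ => by
        rcases h01 ω u with h0 | h1
        · rw [h0, mul_zero]
        · rw [h1, mul_one]; exact hc u)]
      refine Finset.sum_congr rfl fun u _ => ?_
      rcases h01 ω u with h0 | h1
      · have : ω ∉ Y ⁻¹' A ∩ {ω | Y ω u = 1} := by
          simp only [Set.mem_inter_iff, Set.mem_setOf_eq, not_and]
          intro _; rw [h0]; norm_num
        rw [Set.indicator_of_notMem this, h0, mul_zero, ENNReal.ofReal_zero]
      · have hm : ω ∈ Y ⁻¹' A ∩ {ω | Y ω u = 1} := ⟨h, h1⟩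
        rw [Set.indicator_of_mem hm, h1, mul_one]
    · rw [Set.indicator_of_notMem h]
      symm
      refine Finset.sum_eq_zero fun u _ => ?_
      have : ω ∉ Y ⁻¹' A ∩ {ω | Y ω u = 1} := fun hm => h hm.1
      rw [Set.indicator_of_notMem this]
  rw [lintegral_congr key,
    lintegral_finset_sum s (fun u _ => measurable_const.indicator (hmeas u))]
  exact Finset.sum_congr rfl fun u _ => by
    rw [lintegral_indicator_const (hmeas u)]

/-- **Closed-form expression for LT edge weights.**
In the LT one-step sampling model (seed indicators `X i u ∈ {0,1}` with
`P[X i u = 1] = q u`, thresholds `r i v` uniform on `[0,1]`, all mutually independent;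
node `v` is one-step activated in cascade `i` iff `X i v = 1` or
`∑_{u ≠ v} w u v · X i u ≥ r i v`; `ap v = P[B v]` and `apb u v = P[B v | X u = 0]`
for the first cascade), for any distinct `u, v` with `0 < q u < 1` and `q v < 1`:
`w u v = (ap v − apb u v) / (q u · (1 − q v))`. -/
theorem lt_edge_weight_closed_form
    {V : Type*} [Fintype V] [DecidableEq V]
    {Ω : Type*} [MeasurableSpace Ω] (μ : Measure Ω) [IsProbabilityMeasure μ]
    (t : ℕ) (ht : 0 < t)
    (q : V → ℝ) (w : V → V → ℝ)
    (hq : ∀ u, q u ∈ Set.Icc (0 : ℝ) 1)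
    (hw : ∀ u v, w u v ∈ Set.Icc (0 : ℝ) 1)
    (hwdiag : ∀ v, w v v = 0)
    (hwnorm : ∀ v, ∑ u, w u v ≤ 1)
    (X : Fin t → V → Ω → ℝ) (r : Fin t → V → Ω → ℝ)
    (hXmeas : ∀ i u, Measurable (X i u))
    (hrmeas : ∀ i v, Measurable (r i v))
    (hX01 : ∀ i u ω, X i u ω = 0 ∨ X i u ω = 1)
    (hindep : iIndepFun (m := fun _ : (Fin t × V) ⊕ (Fin t × V) =>
        (inferInstance : MeasurableSpace ℝ))
      (Sum.elim (fun a => X a.1 a.2) (fun a => r a.1 a.2)) μ)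
    (hX : ∀ i u, (μ {ω | X i u ω = 1}).toReal = q u)
    (hr : ∀ i v, Measure.map (r i v) μ = (volume : Measure ℝ).restrict (Set.Icc 0 1))
    (ap : V → ℝ)
    (hap : ∀ v, ap v = (μ {ω | X ⟨0, ht⟩ v ω = 1 ∨
        r ⟨0, ht⟩ v ω ≤ ∑ u ∈ Finset.univ.erase v, w u v * X ⟨0, ht⟩ u ω}).toReal)
    (apb : V → V → ℝ)
    (hapb : ∀ u v, apb u v =
      (μ ({ω | X ⟨0, ht⟩ v ω = 1 ∨
          r ⟨0, ht⟩ v ω ≤ ∑ u' ∈ Finset.univ.erase v, w u' v * X ⟨0, ht⟩ u' ω} ∩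
        {ω | X ⟨0, ht⟩ u ω = 0})).toReal /
      (μ {ω | X ⟨0, ht⟩ u ω = 0}).toReal)
    (u v : V) (huv : u ≠ v)
    (hqu : 0 < q u) (hqu1 : q u < 1) (hqv1 : q v < 1) :
    w u v = (ap v - apb u v) / (q u * (1 - q v)) := by
  classical
  set i0 : Fin t := ⟨0, ht⟩ with hi0
  set Y : Ω → V → ℝ := fun ω a => X i0 a ω with hYdef
  set R : Ω → ℝ := r i0 v with hRdef
  have hYmeas : Measurable Y := measurable_pi_lambda _ fun a => hXmeas i0 a
  have hRmeas : Measurable R := hrmeas i0 v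
  have hY01 : ∀ (ω : Ω) (a : V), Y ω a = 0 ∨ Y ω a = 1 := fun ω a => hX01 i0 a ω
  -- measurability of the whole family
  have hFmeas : ∀ j : (Fin t × V) ⊕ (Fin t × V),
      Measurable (Sum.elim (fun a => X a.1 a.2) (fun a => r a.1 a.2) j) := by
    rintro (a | a)
    · exact hXmeas a.1 a.2
    · exact hrmeas a.1 a.2
  -- independence of Y and R
  have hind : IndepFun Y R μ := by
    set S : Finset ((Fin t × V) ⊕ (Fin t × V)) :=
      Finset.image (fun a : V => Sum.inl (i0, a)) Finset.univ with hS
    set T : Finset ((Fin t × V) ⊕ (Fin t × V)) := {Sum.inr (i0, v)} with hT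
    have hST : Disjoint S T := by
      rw [Finset.disjoint_left]
      intro x hxS hxT
      rw [hS, Finset.mem_image] at hxS
      rw [hT, Finset.mem_singleton] at hxT
      rcases hxS with ⟨a, _, rfl⟩
      exact absurd hxT (by simp)
    have h := hindep.indepFun_finset S T hST hFmeas
    have hφ : Measurable (fun (f : {x // x ∈ S} → ℝ) (a : V) =>
        f ⟨Sum.inl (i0, a), Finset.mem_image_of_mem _ (Finset.mem_univ a)⟩) :=
      measurable_pi_lambda _ fun a => measurable_pi_apply _
    have hψ : Measurable (fun f : {x // x ∈ T} → ℝ =>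
        f ⟨Sum.inr (i0, v), Finset.mem_singleton_self _⟩) := measurable_pi_apply _
    exact h.comp hφ hψ
  -- pairwise independence products
  have hpair : ∀ (a b : V), a ≠ b → ∀ (Sa Sb : Set ℝ),
      MeasurableSet Sa → MeasurableSet Sb →
      μ (X i0 a ⁻¹' Sa ∩ X i0 b ⁻¹' Sb) = μ (X i0 a ⁻¹' Sa) * μ (X i0 b ⁻¹' Sb) := by
    intro a b hab Sa Sb hSa hSb
    have h : IndepFun (X i0 a) (X i0 b) μ :=
      hindep.indepFun (show (Sum.inl (i0, a) : (Fin t × V) ⊕ (Fin t × V)) ≠ Sum.inl (i0, b) by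
        simp [hab])
    exact h.measure_inter_preimage_eq_mul Sa Sb hSa hSb
  have htriple : ∀ (a b c : V), a ≠ b → a ≠ c → b ≠ c →
      ∀ (Sa Sb Sc : Set ℝ), MeasurableSet Sa → MeasurableSet Sb → MeasurableSet Sc →
      μ (X i0 a ⁻¹' Sa ∩ X i0 b ⁻¹' Sb ∩ X i0 c ⁻¹' Sc)
        = μ (X i0 a ⁻¹' Sa) * μ (X i0 b ⁻¹' Sb) * μ (X i0 c ⁻¹' Sc) := by
    intro a b c hab hac hbc Sa Sb Sc hSa hSb hSc
    have h : IndepFun (fun ω => (X i0 a ω, X i0 b ω)) (X i0 c) μ :=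
      hindep.indepFun_prodMk hFmeas (Sum.inl (i0, a)) (Sum.inl (i0, b)) (Sum.inl (i0, c))
        (by simp [hac]) (by simp [hbc])
    have h2 := h.measure_inter_preimage_eq_mul (Sa ×ˢ Sb) Sc (hSa.prod hSb) hSc
    have h3 : (fun ω => (X i0 a ω, X i0 b ω)) ⁻¹' (Sa ×ˢ Sb)
        = X i0 a ⁻¹' Sa ∩ X i0 b ⁻¹' Sb := rfl
    rw [h3] at h2
    rw [h2, hpair a b hab Sa Sb hSa hSb]
  -- one-dimensional measures
  have hXone : ∀ a : V, μ {ω | X i0 a ω = 1} = ENNReal.ofReal (q a) := fun a => by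
    rw [← hX i0 a, ENNReal.ofReal_toReal (measure_ne_top μ _)]
  have hsetc : ∀ a : V, {ω | X i0 a ω = 0} = {ω | X i0 a ω = 1}ᶜ := fun a => by
    ext ω
    simp only [Set.mem_setOf_eq, Set.mem_compl_iff]
    constructor
    · intro h0 h1
      rw [h0] at h1
      norm_num at h1
    · intro h1
      rcases hX01 i0 a ω with h | h
      exacts [h, absurd h h1]
  have hXzero : ∀ a : V, μ {ω | X i0 a ω = 0} = ENNReal.ofReal (1 - q a) := fun a => by
    have hm : MeasurableSet {ω | X i0 a ω = 1} := (hXmeas i0 a) (measurableSet_singleton 1)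
    rw [hsetc a, measure_compl hm (measure_ne_top μ _), measure_univ, hXone a,
      ENNReal.ofReal_sub 1 (hq a).1, ENNReal.ofReal_one]
  -- the weight function
  set g : (V → ℝ) → ℝ := fun y => ∑ u' ∈ Finset.univ.erase v, w u' v * y u' with hgdef
  have hgmeas : Measurable g := by
    rw [hgdef]
    exact Finset.measurable_sum _ fun u' _ => by fun_prop
  have hg0 : ∀ ω, 0 ≤ g (Y ω) := fun ω => by
    rw [hgdef]
    refine Finset.sum_nonneg fun u' _ => ?_
    rcases hY01 ω u' with h | h <;> rw [h] <;> simp [(hw u' v).1]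
  have hg1 : ∀ ω, g (Y ω) ≤ 1 := fun ω => by
    rw [hgdef]
    calc ∑ u' ∈ Finset.univ.erase v, w u' v * Y ω u'
        ≤ ∑ u' ∈ Finset.univ.erase v, w u' v := by
          refine Finset.sum_le_sum fun u' _ => ?_
          rcases hY01 ω u' with h | h <;> rw [h] <;> simp [(hw u' v).1]
      _ ≤ ∑ u', w u' v := Finset.sum_le_sum_of_subset_of_nonneg
          (Finset.erase_subset _ _) (fun u' _ _ => (hw u' v).1)
      _ ≤ 1 := hwnorm v
  -- the two conditioning sets
  set A1 : Set (V → ℝ) := {y | y v = 0} with hA1def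
  have hA1 : MeasurableSet A1 := (measurable_pi_apply v) (measurableSet_singleton 0)
  set A2 : Set (V → ℝ) := {y | y v = 0 ∧ y u = 0} with hA2def
  have hA2 : MeasurableSet A2 :=
    ((measurable_pi_apply v) (measurableSet_singleton 0)).inter
      ((measurable_pi_apply u) (measurableSet_singleton 0))
  -- generic second-part computation
  have hw0 : ∀ u' : V, 0 ≤ w u' v := fun u' => (hw u' v).1
  have hpart : ∀ A : Set (V → ℝ), MeasurableSet A →
      μ {ω | Y ω ∈ A ∧ R ω ≤ g (Y ω)}
        = ∑ u' ∈ Finset.univ.erase v,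
            ENNReal.ofReal (w u' v) * μ (Y ⁻¹' A ∩ {ω | Y ω u' = 1}) := by
    intro A hA
    rw [aux_tail μ Y R hYmeas hRmeas hind (hr i0 v) A hA g hgmeas hg0 hg1, hgdef]
    exact aux_sum μ Y hYmeas hY01 A hA (Finset.univ.erase v) (fun u' => w u' v) hw0
  have hq1v : 0 ≤ 1 - q v := by linarith [(hq v).2]
  have hq1u : 0 ≤ 1 - q u := by linarith
  -- first event
  set s1 : ℝ := ∑ u' ∈ Finset.univ.erase v, w u' v * ((1 - q v) * q u') with hs1def
  have hterm_nonneg : ∀ u' : V, 0 ≤ w u' v * ((1 - q v) * q u') := fun u' =>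
    mul_nonneg (hw0 u') (mul_nonneg hq1v (hq u').1)
  have hμ1 : μ {ω | Y ω ∈ A1 ∧ R ω ≤ g (Y ω)} = ENNReal.ofReal s1 := by
    rw [hpart A1 hA1, hs1def,
      ENNReal.ofReal_sum_of_nonneg (fun u' _ => hterm_nonneg u')]
    refine Finset.sum_congr rfl fun u' hu' => ?_
    have hvu' : v ≠ u' := fun h => (Finset.mem_erase.mp hu').1 h.symm
    have hset : Y ⁻¹' A1 ∩ {ω | Y ω u' = 1}
        = X i0 v ⁻¹' {0} ∩ X i0 u' ⁻¹' {1} := rfl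
    rw [hset, hpair v u' hvu' _ _ (measurableSet_singleton 0) (measurableSet_singleton 1)]
    have h0 : μ (X i0 v ⁻¹' {(0 : ℝ)}) = ENNReal.ofReal (1 - q v) := hXzero v
    have h1 : μ (X i0 u' ⁻¹' {(1 : ℝ)}) = ENNReal.ofReal (q u') := hXone u'
    rw [h0, h1, ← ENNReal.ofReal_mul hq1v, ← ENNReal.ofReal_mul (hw0 u')]
  have hBset : {ω | X i0 v ω = 1 ∨ R ω ≤ ∑ u' ∈ Finset.univ.erase v, w u' v * X i0 u' ω}
      = {ω | X i0 v ω = 1} ∪ {ω | Y ω ∈ A1 ∧ R ω ≤ g (Y ω)} := by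
    ext ω
    have hgY : g (Y ω) = ∑ u' ∈ Finset.univ.erase v, w u' v * X i0 u' ω := rfl
    simp only [Set.mem_setOf_eq, Set.mem_union, hA1def, hgY]
    constructor
    · rintro (h | h)
      · exact Or.inl h
      · rcases hX01 i0 v ω with h0 | h1
        · exact Or.inr ⟨h0, h⟩
        · exact Or.inl h1
    · rintro (h | ⟨_, h⟩)
      · exact Or.inl h
      · exact Or.inr h
  have hmeas2 : ∀ A : Set (V → ℝ), MeasurableSet A →
      MeasurableSet {ω | Y ω ∈ A ∧ R ω ≤ g (Y ω)} := fun A hA =>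
    (hYmeas hA).inter (measurableSet_le hRmeas (hgmeas.comp hYmeas))
  have hdisj1 : Disjoint {ω | X i0 v ω = 1} {ω | Y ω ∈ A1 ∧ R ω ≤ g (Y ω)} := by
    rw [Set.disjoint_left]
    rintro ω h1 ⟨h0, _⟩
    rw [Set.mem_setOf_eq] at h1
    have h0' : X i0 v ω = 0 := h0
    rw [h1] at h0'
    norm_num at h0'
  have hs1nonneg : 0 ≤ s1 := Finset.sum_nonneg fun u' _ => hterm_nonneg u'
  have hapv : ap v = q v + s1 := by
    rw [hap v]
    have : (μ {ω | X i0 v ω = 1 ∨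
        R ω ≤ ∑ u' ∈ Finset.univ.erase v, w u' v * X i0 u' ω}).toReal = q v + s1 := by
      rw [hBset, measure_union hdisj1 (hmeas2 A1 hA1), hXone v, hμ1,
        ← ENNReal.ofReal_add (hq v).1 hs1nonneg,
        ENNReal.toReal_ofReal (by linarith [(hq v).1])]
    exact this
  -- second event
  set s2 : ℝ := ∑ u' ∈ (Finset.univ.erase v).erase u, w u' v * ((1 - q v) * q u') with hs2def
  have hs2nonneg : 0 ≤ s2 := Finset.sum_nonneg fun u' _ => hterm_nonneg u'
  have hμ2 : μ {ω | Y ω ∈ A2 ∧ R ω ≤ g (Y ω)} = ENNReal.ofReal ((1 - q u) * s2) := by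
    rw [hpart A2 hA2]
    have hu_mem : u ∈ Finset.univ.erase v := Finset.mem_erase.mpr ⟨huv, Finset.mem_univ u⟩
    rw [← Finset.add_sum_erase _ _ hu_mem]
    have hzero : μ (Y ⁻¹' A2 ∩ {ω | Y ω u = 1}) = 0 := by
      have : Y ⁻¹' A2 ∩ {ω | Y ω u = 1} = ∅ := by
        rw [Set.eq_empty_iff_forall_notMem]
        rintro ω ⟨⟨_, h0⟩, h1⟩
        rw [Set.mem_setOf_eq] at h1
        rw [h1] at h0
        norm_num at h0
      rw [this, measure_empty]
    rw [hzero, mul_zero, zero_add]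
    have hterm : ∀ u' ∈ (Finset.univ.erase v).erase u,
        ENNReal.ofReal (w u' v) * μ (Y ⁻¹' A2 ∩ {ω | Y ω u' = 1})
          = ENNReal.ofReal ((1 - q u) * (w u' v * ((1 - q v) * q u'))) := by
      intro u' hu'
      have hu'u : u' ≠ u := (Finset.mem_erase.mp hu').1
      have hu'v : u' ≠ v := (Finset.mem_erase.mp (Finset.mem_erase.mp hu').2).1
      have hset : Y ⁻¹' A2 ∩ {ω | Y ω u' = 1}
          = X i0 v ⁻¹' {0} ∩ X i0 u ⁻¹' {0} ∩ X i0 u' ⁻¹' {1} := rfl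
      rw [hset, htriple v u u' huv.symm (fun h => hu'v h.symm) (fun h => hu'u h.symm) _ _ _
        (measurableSet_singleton 0) (measurableSet_singleton 0) (measurableSet_singleton 1)]
      have h0 : μ (X i0 v ⁻¹' {(0 : ℝ)}) = ENNReal.ofReal (1 - q v) := hXzero v
      have h0' : μ (X i0 u ⁻¹' {(0 : ℝ)}) = ENNReal.ofReal (1 - q u) := hXzero u
      have h1 : μ (X i0 u' ⁻¹' {(1 : ℝ)}) = ENNReal.ofReal (q u') := hXone u'
      rw [h0, h0', h1, ← ENNReal.ofReal_mul hq1v,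
        ← ENNReal.ofReal_mul (mul_nonneg hq1v hq1u), ← ENNReal.ofReal_mul (hw0 u')]
      congr 1
      ring
    rw [Finset.sum_congr rfl hterm, ← ENNReal.ofReal_sum_of_nonneg
      (fun u' _ => mul_nonneg hq1u (hterm_nonneg u')), ← Finset.mul_sum, hs2def]
  have hCset : {ω | X i0 v ω = 1 ∨ R ω ≤ ∑ u' ∈ Finset.univ.erase v, w u' v * X i0 u' ω}
        ∩ {ω | X i0 u ω = 0}
      = (X i0 v ⁻¹' {1} ∩ X i0 u ⁻¹' {0}) ∪ {ω | Y ω ∈ A2 ∧ R ω ≤ g (Y ω)} := by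
    ext ω
    have hgY : g (Y ω) = ∑ u' ∈ Finset.univ.erase v, w u' v * X i0 u' ω := rfl
    simp only [Set.mem_inter_iff, Set.mem_setOf_eq, Set.mem_union, Set.mem_preimage,
      Set.mem_singleton_iff, hA2def, hgY]
    constructor
    · rintro ⟨h | h, hu0⟩
      · exact Or.inl ⟨h, hu0⟩
      · rcases hX01 i0 v ω with h0 | h1
        · exact Or.inr ⟨⟨h0, hu0⟩, h⟩
        · exact Or.inl ⟨h1, hu0⟩
    · rintro (⟨h1, h0⟩ | ⟨⟨hv0, hu0⟩, hR⟩)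
      · exact ⟨Or.inl h1, h0⟩
      · exact ⟨Or.inr hR, hu0⟩
  have hdisj2 : Disjoint (X i0 v ⁻¹' {(1 : ℝ)} ∩ X i0 u ⁻¹' {0})
      {ω | Y ω ∈ A2 ∧ R ω ≤ g (Y ω)} := by
    rw [Set.disjoint_left]
    rintro ω ⟨h1, _⟩ ⟨h0, _⟩
    have h1' : X i0 v ω = 1 := h1
    have h0' : X i0 v ω = 0 := h0.1
    rw [h1'] at h0'
    norm_num at h0'
  have hμC : (μ ({ω | X i0 v ω = 1 ∨
      R ω ≤ ∑ u' ∈ Finset.univ.erase v, w u' v * X i0 u' ω} ∩ {ω | X i0 u ω = 0})).toReal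
      = q v * (1 - q u) + (1 - q u) * s2 := by
    rw [hCset, measure_union hdisj2 (hmeas2 A2 hA2), hμ2,
      hpair v u huv.symm _ _ (measurableSet_singleton 1) (measurableSet_singleton 0)]
    have h1 : μ (X i0 v ⁻¹' {(1 : ℝ)}) = ENNReal.ofReal (q v) := hXone v
    have h0 : μ (X i0 u ⁻¹' {(0 : ℝ)}) = ENNReal.ofReal (1 - q u) := hXzero u
    rw [h1, h0, ← ENNReal.ofReal_mul (hq v).1,
      ← ENNReal.ofReal_add (mul_nonneg (hq v).1 hq1u) (mul_nonneg hq1u hs2nonneg),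
      ENNReal.toReal_ofReal (add_nonneg (mul_nonneg (hq v).1 hq1u) (mul_nonneg hq1u hs2nonneg))]
  have hXu0 : (μ {ω | X i0 u ω = 0}).toReal = 1 - q u := by
    rw [hXzero u, ENNReal.toReal_ofReal hq1u]
  have hapbuv : apb u v = q v + s2 := by
    rw [hapb u v, hμC, hXu0, div_eq_iff (by linarith : (1:ℝ) - q u ≠ 0)]
    ring
  -- final arithmetic
  have hu_mem : u ∈ Finset.univ.erase v := Finset.mem_erase.mpr ⟨huv, Finset.mem_univ u⟩
  have hs12 : s1 = w u v * ((1 - q v) * q u) + s2 := by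
    have h := Finset.add_sum_erase (Finset.univ.erase v)
      (fun u' => w u' v * ((1 - q v) * q u')) hu_mem
    rw [hs1def, hs2def, ← h]
  have hpos : q u * (1 - q v) ≠ 0 := ne_of_gt (mul_pos hqu (by linarith))
  rw [hapv, hapbuv, hs12, eq_div_iff hpos]
  ring
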